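/- Let ε be a tree-like map explained by an edge-labeled tree (T,λ). If the path P from the root ρ_T to some leaf x ∈ X contains an m-edge for some m ∈ M, then every edge of P has label m or ⊗. -/

import Mathlib

namespace GenFitch

/-- A rooted tree with leaf set `X`: a finite tree (acyclic connected simple
graph) with a distinguished root and an injective embedding of `X` onto the
set of vertices of degree at most one (the leaves). -/
structure RootedTree (X : Type) where
  V : Type
  fintypeV : Fintype V
  G : SimpleGraph V
  isTree : G.IsTree
  root : V
  leaf : X → V
  leaf_inj : Function.Injective leaf
  leaf_iff : ∀ v : V, (∃ x : X, leaf x = v) ↔ (G.neighborSet v).ncard ≤ 1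

namespace RootedTree

variable {X : Type}

/-- Degree of a vertex. -/
noncomputable def deg (T : RootedTree X) (v : T.V) : ℕ := (T.G.neighborSet v).ncard

/-- `v` is a leaf. -/
def IsLeaf (T : RootedTree X) (v : T.V) : Prop := ∃ x : X, T.leaf x = v

/-- `T` is phylogenetic: the root is an inner vertex of degree at least 2 and
every other inner vertex has degree at least 3. -/
def Phylo (T : RootedTree X) : Prop :=
  ¬ T.IsLeaf T.root ∧ 2 ≤ T.deg T.root ∧
    ∀ v : T.V, ¬ T.IsLeaf v → v ≠ T.root → 3 ≤ T.deg v

/-- `T` is binary: the root has degree exactly 2 and every other inner vertex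
has degree exactly 3. -/
def Binary (T : RootedTree X) : Prop :=
  T.deg T.root = 2 ∧ ∀ v : T.V, ¬ T.IsLeaf v → v ≠ T.root → T.deg v = 3

/-- `u` is an ancestor of `v` (written `u ⪰_T v`): `u` lies on the (unique)
path from the root to `v`. -/
def Anc (T : RootedTree X) (u v : T.V) : Prop :=
  ∀ p : T.G.Walk T.root v, p.IsPath → u ∈ p.support

/-- `l` is the least common ancestor of the set of vertices `S`. -/
def IsLcaSet (T : RootedTree X) (l : T.V) (S : Set T.V) : Prop :=
  (∀ v ∈ S, T.Anc l v) ∧ ∀ u : T.V, (∀ v ∈ S, T.Anc u v) → T.Anc u l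

/-- `T` displays the rooted triple `xy|z`, i.e. `lca(x,y) ≺ lca(x,y,z)`. -/
def Displays (T : RootedTree X) (x y z : X) : Prop :=
  ∃ l₂ l₃ : T.V, T.IsLcaSet l₂ {T.leaf x, T.leaf y} ∧
    T.IsLcaSet l₃ {T.leaf x, T.leaf y, T.leaf z} ∧ T.Anc l₃ l₂ ∧ l₂ ≠ l₃

end RootedTree

/-- Some edge on the (unique) path from `lca(x,y)` to `y` carries the label
`m`.  Labels are drawn from `Option L`, with `none` playing the role of `⊗`. -/
def PathHasLabel {X L : Type} (T : RootedTree X) (lam : Sym2 T.V → Option L)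
    (x y : X) (m : L) : Prop :=
  ∃ l : T.V, T.IsLcaSet l {T.leaf x, T.leaf y} ∧
    ∃ p : T.G.Walk l (T.leaf y), p.IsPath ∧ ∃ e ∈ p.edges, lam e = some m

/-- The edge-labeled tree `(T,lam)` explains the map `eps`:
for all distinct `x y`, `eps x y = some m` iff some edge on the path from
`lca(x,y)` to `y` has label `m`, and `eps x y = none` (i.e. `⊗`) iff no edge
on that path carries a label in `L`. -/
def Explains {X L : Type} (T : RootedTree X) (lam : Sym2 T.V → Option L)
    (eps : X → X → Option L) : Prop :=
  ∀ x y : X, x ≠ y →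
    ((∀ m : L, eps x y = some m ↔ PathHasLabel T lam x y m) ∧
     (eps x y = none ↔ ∀ m : L, ¬ PathHasLabel T lam x y m))

/-- `eps` is tree-like: some edge-labeled phylogenetic tree explains it. -/
def TreeLike {X L : Type} (eps : X → X → Option L) : Prop :=
  ∃ (T : RootedTree X) (lam : Sym2 T.V → Option L), T.Phylo ∧ Explains T lam eps

/-- The set `X_s` for a symbol `s ∈ M ∪ {⊗}` (encoded as `s : Option M`):
those `x` having an in-arc labeled `s` and all other in-arcs labeled `⊗` or `s`. -/
def Xset {X M : Type} (eps : X → X → Option M) (s : Option M) : Set X :=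
  {x : X | ∃ z : X, z ≠ x ∧ eps z x = s ∧
    ∀ z' : X, z' ≠ z → z' ≠ x → (eps z' x = none ∨ eps z' x = s)}

/-- The sets `X_s`, `s ∈ M ∪ {⊗}`, form a quasi-partition of `X`: pairwise
disjoint, union `X`, and at most one of them empty. -/
def QuasiPartition {X M : Type} (eps : X → X → Option M) : Prop :=
  (∀ s t : Option M, s ≠ t → Disjoint (Xset eps s) (Xset eps t)) ∧
  (⋃ s : Option M, Xset eps s) = Set.univ ∧
  {s : Option M | Xset eps s = ∅}.Subsingleton

/-- A digraph `(Y, A)` is a simple Fitch graph: it is explained by a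
`{1,⊗}`-edge-labeled phylogenetic tree on `Y` (a digraph on at most one
vertex is trivially explained by the trivial tree). -/
def IsFitchGraph (Y : Type) (A : Y → Y → Prop) : Prop :=
  Subsingleton Y ∨
  ∃ (T : RootedTree Y) (lam : Sym2 T.V → Option Unit), T.Phylo ∧
    ∀ x y : Y, x ≠ y → (A x y ↔ PathHasLabel T lam x y Unit.unit)

/-- `T'` is obtained from `T` by contracting (the fibers of) `φ`; equivalently,
`T` refines `T'`. -/
structure IsContractionMap {X : Type} (T T' : RootedTree X) (φ : T.V → T'.V) :
    Prop where
  surj : Function.Surjective φ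
  root_map : φ T.root = T'.root
  leaf_map : ∀ x : X, φ (T.leaf x) = T'.leaf x
  adj_map : ∀ a b : T.V, T.G.Adj a b → φ a = φ b ∨ T'.G.Adj (φ a) (φ b)
  adj_lift : ∀ u v : T'.V, T'.G.Adj u v →
    ∃ a b : T.V, T.G.Adj a b ∧ φ a = u ∧ φ b = v
  fiber_conn : ∀ u : T'.V, (T.G.induce {a : T.V | φ a = u}).Connected

/-- `(T,lam)` is a least-resolved tree explaining `eps`: it explains `eps` and
no tree obtained from `T` by contracting one or more edges admits an
edge-labeling explaining `eps`. -/
def LeastResolved {X M : Type} (eps : X → X → Option M) (T : RootedTree X)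
    (lam : Sym2 T.V → Option M) : Prop :=
  T.Phylo ∧ Explains T lam eps ∧
    ∀ (T' : RootedTree X) (φ : T.V → T'.V) (lam' : Sym2 T'.V → Option M),
      IsContractionMap T T' φ → ¬ Function.Injective φ → T'.Phylo →
        ¬ Explains T' lam' eps

/-- The rooted triple `xy|z` is informative for `eps`. -/
def Informative {X M : Type} (eps : X → X → Option M) (x y z : X) : Prop :=
  x ≠ y ∧ x ≠ z ∧ y ≠ z ∧
  ∃ m : M, eps z x = some m ∧ eps z y = some m ∧ eps x z = eps y z ∧
    (eps x y = none ∨ eps x y = some m) ∧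
    (eps y x = none ∨ eps y x = some m) ∧
    (eps x y = none ∨ eps y x = none)

/-- `T'` (a rooted tree on `Y`, with `incl : Y → X` and vertex embedding `ι`)
is the restriction `T|Y` of `T` to the leaf set `Y`: leaves map to leaves,
the ancestor relation is preserved and reflected, the vertices of `T'`
correspond exactly to the least common ancestors of pairs of `Y`-leaves in
`T`, and the root of `T'` corresponds to the least common ancestor of all
`Y`-leaves. -/
structure IsRestriction {X Y : Type} (T : RootedTree X) (incl : Y → X)
    (T' : RootedTree Y) (ι : T'.V → T.V) : Prop where
  inj : Function.Injective ι
  leaf_map : ∀ y : Y, ι (T'.leaf y) = T.leaf (incl y)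
  anc_iff : ∀ a b : T'.V, T'.Anc a b ↔ T.Anc (ι a) (ι b)
  image : ∀ v : T.V, (∃ a : T'.V, ι a = v) ↔
      ∃ y z : Y, T.IsLcaSet v {T.leaf (incl y), T.leaf (incl z)}
  root_map : T.IsLcaSet (ι T'.root) {v : T.V | ∃ y : Y, v = T.leaf (incl y)}

section Aux

open SimpleGraph Walk

/-- In a tree, any two paths with the same endpoints agree. -/
lemma tree_path_unique {V : Type} {G : SimpleGraph V} (hG : G.IsTree) {a b : V}
    (p q : G.Walk a b) (hp : p.IsPath) (hq : q.IsPath) : p = q := by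
  obtain ⟨r, -, hr⟩ := hG.existsUnique_path a b
  rw [hr p hp, hr q hq]

lemma getVert_one_takeUntil {V : Type} [DecidableEq V] {G : SimpleGraph V} {a b u : V}
    (r : G.Walk a b) (h : u ∈ r.support) (hu : u ≠ a) :
    (r.takeUntil u h).getVert 1 = r.getVert 1 := by
  have hlen : 1 ≤ (r.takeUntil u h).length := by
    rcases Nat.eq_zero_or_pos (r.takeUntil u h).length with h0 | h1
    · exact absurd (Walk.eq_of_length_eq_zero h0).symm hu
    · exact h1
  conv_rhs => rw [← r.take_spec h]
  rw [Walk.getVert_append]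
  split_ifs with h1
  · rfl
  · have h2 : (r.takeUntil u h).length = 1 := le_antisymm (not_lt.mp h1) hlen
    calc (r.takeUntil u h).getVert 1
        = (r.takeUntil u h).getVert (r.takeUntil u h).length := by rw [h2]
      _ = u := Walk.getVert_length _
      _ = (r.dropUntil u h).getVert (1 - (r.takeUntil u h).length) := by
            rw [h2]; simp

/-- In a tree, at most one neighbor of the endpoint of a path lies on the path. -/
lemma nbr_unique {V : Type} [DecidableEq V] {G : SimpleGraph V} (hG : G.IsTree)
    {a v : V} (q : G.Walk a v) (hq : q.IsPath) {u u' : V}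
    (h : G.Adj v u) (h' : G.Adj v u') (hu : u ∈ q.support) (hu' : u' ∈ q.support) :
    u = u' := by
  have key : ∀ (z : V) (hz : G.Adj v z) (hzs : z ∈ q.support),
      ((q.takeUntil z hzs).concat hz.symm).IsPath := by
    intro z hz hzs
    have ht : (q.takeUntil z hzs).IsPath := hq.takeUntil hzs
    have hv : v ∉ (q.takeUntil z hzs).support := by
      intro hvm
      have hnd := (Walk.isPath_def q).mp hq
      have hsplit : q.support
          = (q.takeUntil z hzs).support ++ ((q.dropUntil z hzs).support).tail := by
        rw [← Walk.support_append, Walk.take_spec]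
      rw [hsplit] at hnd
      have hdisj := List.disjoint_of_nodup_append hnd
      have hzv : z ≠ v := hz.ne'
      have hvd : v ∈ ((q.dropUntil z hzs).support).tail := by
        have hve : v ∈ (q.dropUntil z hzs).support := Walk.end_mem_support _
        rw [Walk.support_eq_cons] at hve
        rcases List.mem_cons.mp hve with h1 | h1
        · exact absurd h1.symm hzv
        · exact h1
      exact hdisj hvm hvd
    rw [Walk.isPath_def, Walk.support_concat, List.nodup_append']
    refine ⟨(Walk.isPath_def _).mp ht, List.nodup_singleton _, ?_⟩
    intro x hx hxv
    rw [List.mem_singleton] at hxv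
    exact hv (hxv ▸ hx)
  have h1 := key u h hu
  have h2 := key u' h' hu'
  have heq := tree_path_unique hG _ _ h1 h2
  obtain ⟨hvv, -⟩ := Walk.concat_inj heq
  exact hvv

/-- From a non-leaf endpoint of a path one can step to a fresh vertex. -/
lemma exists_fresh_nbr {X : Type} (T : RootedTree X) {v : T.V} (q : T.G.Walk T.root v)
    (hq : q.IsPath) (hv : ¬ T.IsLeaf v) : ∃ u, T.G.Adj v u ∧ u ∉ q.support := by
  classical
  letI := T.fintypeV
  have hdeg : 1 < (T.G.neighborSet v).ncard := by
    by_contra hle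
    push_neg at hle
    exact hv ((T.leaf_iff v).mpr hle)
  obtain ⟨a, b, ha, hb, hab⟩ := (Set.one_lt_ncard_iff (Set.toFinite _)).mp hdeg
  by_cases has : a ∈ q.support
  · by_cases hbs : b ∈ q.support
    · exact absurd (nbr_unique T.isTree q hq ha hb has hbs) hab
    · exact ⟨b, hb, hbs⟩
  · exact ⟨a, ha, has⟩

/-- Starting from any edge at the root, there is a leaf whose root-path begins
with that edge. -/
lemma exists_other_leaf {X : Type} (T : RootedTree X) {w : T.V}
    (hadj : T.G.Adj T.root w) :
    ∃ (y : X) (q : T.G.Walk T.root (T.leaf y)), q.IsPath ∧ q.getVert 1 = w := by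
  classical
  letI := T.fintypeV
  suffices h : ∀ (n : ℕ) (v : T.V) (q : T.G.Walk T.root v), q.IsPath → q.getVert 1 = w →
      1 ≤ q.length → Fintype.card T.V ≤ q.support.length + n →
      ∃ (y : X) (q' : T.G.Walk T.root (T.leaf y)), q'.IsPath ∧ q'.getVert 1 = w by
    refine h (Fintype.card T.V) w (Walk.cons hadj Walk.nil) ?_ rfl (by simp) ?_
    · rw [Walk.cons_isPath_iff]
      refine ⟨Walk.IsPath.nil, ?_⟩
      simp [hadj.ne]
    · exact Nat.le_add_left _ _
  intro n
  induction n with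
  | zero =>
    intro v q hq hq1 hql hcard
    by_cases hvleaf : T.IsLeaf v
    · obtain ⟨y, hy⟩ := hvleaf
      exact ⟨y, q.copy rfl hy.symm, by simpa using hq, by simpa using hq1⟩
    · obtain ⟨u, huadj, hus⟩ := exists_fresh_nbr T q hq hvleaf
      exfalso
      have hq' : (q.concat huadj).IsPath := by
        rw [Walk.isPath_def, Walk.support_concat, List.nodup_append']
        refine ⟨(Walk.isPath_def _).mp hq, List.nodup_singleton _, ?_⟩
        intro x hx hxu
        rw [List.mem_singleton] at hxu
        exact hus (hxu ▸ hx)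
      have hle := ((Walk.isPath_def _).mp hq').length_le_card
      rw [Walk.support_concat, List.length_append, List.length_singleton] at hle
      omega
  | succ n ih =>
    intro v q hq hq1 hql hcard
    by_cases hvleaf : T.IsLeaf v
    · obtain ⟨y, hy⟩ := hvleaf
      exact ⟨y, q.copy rfl hy.symm, by simpa using hq, by simpa using hq1⟩
    · obtain ⟨u, huadj, hus⟩ := exists_fresh_nbr T q hq hvleaf
      have hq' : (q.concat huadj).IsPath := by
        rw [Walk.isPath_def, Walk.support_concat, List.nodup_append']
        refine ⟨(Walk.isPath_def _).mp hq, List.nodup_singleton _, ?_⟩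
        intro x hx hxu
        rw [List.mem_singleton] at hxu
        exact hus (hxu ▸ hx)
      refine ih u (q.concat huadj) hq' ?_ ?_ ?_
      · rw [Walk.concat_eq_append, Walk.getVert_append]
        split_ifs with hlt
        · exact hq1
        · have hlen1 : q.length = 1 := by omega
          have : (1 : ℕ) - q.length = 0 := by omega
          rw [this, Walk.getVert_zero, ← hq1]
          calc v = q.getVert q.length := (Walk.getVert_length q).symm
            _ = q.getVert 1 := by rw [hlen1]
      · rw [Walk.length_concat]; omega
      · rw [Walk.support_concat, List.length_append, List.length_singleton]; omega

end Aux

theorem stmt0 {X M : Type} [Fintype X] [Fintype M] [Nonempty M]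
    (hX : 1 < Fintype.card X)
    (eps : X → X → Option M)
    (hattain : ∀ m : M, ∃ x y : X, x ≠ y ∧ eps x y = some m)
    (T : RootedTree X) (lam : Sym2 T.V → Option M)
    (hphylo : T.Phylo) (hexp : Explains T lam eps)
    (x : X) (m : M)
    (p : T.G.Walk T.root (T.leaf x)) (hp : p.IsPath)
    (hm : ∃ e ∈ p.edges, lam e = some m) :
    ∀ e ∈ p.edges, lam e = some m ∨ lam e = none := by
  classical
  letI := T.fintypeV
  -- the root is not a leaf, so the path to `x` is nonempty
  have hleafx : T.IsLeaf (T.leaf x) := ⟨x, rfl⟩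
  have hxroot : T.leaf x ≠ T.root := by
    intro h
    exact hphylo.1 (h ▸ hleafx)
  have hplen : 1 ≤ p.length := by
    rcases Nat.eq_zero_or_pos p.length with h0 | h1
    · exact absurd (SimpleGraph.Walk.eq_of_length_eq_zero h0).symm hxroot
    · exact h1
  -- the second vertex of `p`
  set w0 := p.getVert 1 with hw0
  have hadj0 : T.G.Adj T.root w0 := by
    have := p.adj_getVert_succ (i := 0) (by omega)
    simpa using this
  -- pick another neighbor of the root
  have hdeg : 1 < (T.G.neighborSet T.root).ncard := hphylo.2.1
  obtain ⟨w, hwmem, hww0⟩ := Set.exists_ne_of_one_lt_ncard hdeg w0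
  have hadjw : T.G.Adj T.root w := hwmem
  -- a leaf `y` whose root-path starts with the edge `root-w`
  obtain ⟨y, q, hq, hq1⟩ := exists_other_leaf T hadjw
  -- the two paths meet only at the root
  have hmeet : ∀ u : T.V, u ∈ p.support → u ∈ q.support → u = T.root := by
    intro u hup huq
    by_contra hur
    have h1 : (p.takeUntil u hup).getVert 1 = p.getVert 1 :=
      getVert_one_takeUntil p hup hur
    have h2 : (q.takeUntil u huq).getVert 1 = q.getVert 1 :=
      getVert_one_takeUntil q huq hur
    have heq : p.takeUntil u hup = q.takeUntil u huq :=
      tree_path_unique T.isTree _ _ (hp.takeUntil hup) (hq.takeUntil huq)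
    rw [heq, h2, hq1] at h1
    exact hww0 h1
  -- `y ≠ x`
  have hyx : y ≠ x := by
    intro h
    subst h
    have : T.leaf y = T.root :=
      hmeet _ (SimpleGraph.Walk.end_mem_support p) (SimpleGraph.Walk.end_mem_support q)
    exact hxroot this
  -- the root is the lca of `leaf y` and `leaf x`
  have hlca : T.IsLcaSet T.root {T.leaf y, T.leaf x} := by
    constructor
    · intro v hv r hr
      exact SimpleGraph.Walk.start_mem_support r
    · intro u hu r hr
      have hups : u ∈ p.support := hu (T.leaf x) (by simp) p hp
      have huqs : u ∈ q.support := hu (T.leaf y) (by simp) q hq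
      have huroot : u = T.root := hmeet u hups huqs
      have : r = SimpleGraph.Walk.nil := (SimpleGraph.Walk.isPath_iff_eq_nil (p := r)).mp hr
      subst this
      simp [huroot]
  -- any label occurring on `p` is the value of `eps y x`
  have key : ∀ m'' : M, (∃ e ∈ p.edges, lam e = some m'') → eps y x = some m'' := by
    intro m'' hm''
    exact ((hexp y x (by simpa using hyx)).1 m'').mpr ⟨T.root, hlca, p, hp, hm''⟩
  have hepsm : eps y x = some m := key m hm
  intro e he
  cases hle : lam e with
  | none => exact Or.inr rfl
  | some m' =>
    left
    have hepsm' : eps y x = some m' := key m' ⟨e, he, hle⟩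
    rw [hepsm] at hepsm'
    exact hepsm'.symm

end GenFitch
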